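/- Let G be a strongly connected signed digraph. Then G is structurally balanced if and only if the improved Laplacian potential function Φ_e is positive semidefinite with null set exactly span{D·1_n}; that is, if and only if Φ_e(x) ≥ 0 for all x ∈ ℝⁿ and there exists a gauge transformation D with every entry of D·A·D nonnegative such that for every x ∈ ℝⁿ, Φ_e(x) = 0 implies x = c·D·1_n for some c ∈ ℝ, where 1_n is the all-ones vector in ℝⁿ. -/
import Mathlib


open Matrix BigOperators Filter

/-- In-degree of node `i`: sum of absolute values of the `i`-th row of `A`. -/
noncomputable def inDeg {n : ℕ} (A : Matrix (Fin n) (Fin n) ℝ) (i : Fin n) : ℝ := ∑ j, |A i j|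

/-- Laplacian `L = Δ − A` of the signed digraph with adjacency matrix `A`. -/
noncomputable def lapOf {n : ℕ} (A : Matrix (Fin n) (Fin n) ℝ) : Matrix (Fin n) (Fin n) ℝ :=
  Matrix.diagonal (inDeg A) - A

/-- Laplacian `L̄ = Δ − Ā` of the induced unsigned digraph. -/
noncomputable def lapBar {n : ℕ} (A : Matrix (Fin n) (Fin n) ℝ) : Matrix (Fin n) (Fin n) ℝ :=
  Matrix.diagonal (inDeg A) - Matrix.of (fun i j => |A i j|)

/-- `det(L̄_ii)`: determinant of `L̄` with its `i`-th row and column removed. -/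
noncomputable def minorDet {n : ℕ} (A : Matrix (Fin n) (Fin n) ℝ) (i : Fin n) : ℝ :=
  Matrix.det ((lapBar A).submatrix (fun k : {j : Fin n // j ≠ i} => (k : Fin n))
    (fun k : {j : Fin n // j ≠ i} => (k : Fin n)))

/-- `W = diag(det(L̄_11), …, det(L̄_nn))`. -/
noncomputable def Wmat {n : ℕ} (A : Matrix (Fin n) (Fin n) ℝ) : Matrix (Fin n) (Fin n) ℝ :=
  Matrix.diagonal (minorDet A)

/-- Mirror adjacency matrix `Â = (W·A + Aᵀ·W)/2`. -/
noncomputable def mirrorAdj {n : ℕ} (A : Matrix (Fin n) (Fin n) ℝ) : Matrix (Fin n) (Fin n) ℝ :=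
  (1/2 : ℝ) • (Wmat A * A + Aᵀ * Wmat A)

/-- Mirror Laplacian `L̂ = (W·L + Lᵀ·W)/2`. -/
noncomputable def mirrorLap {n : ℕ} (A : Matrix (Fin n) (Fin n) ℝ) : Matrix (Fin n) (Fin n) ℝ :=
  (1/2 : ℝ) • (Wmat A * lapOf A + (lapOf A)ᵀ * Wmat A)

/-- `(j, i)` is a directed edge when `a_ij ≠ 0`; strong connectivity: a directed
path between every ordered pair of distinct nodes. -/
def StronglyConnected {n : ℕ} (A : Matrix (Fin n) (Fin n) ℝ) : Prop :=
  ∀ i j : Fin n, i ≠ j → Relation.TransGen (fun u v => A v u ≠ 0) i j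

/-- `σ` is the diagonal of a gauge transformation: each entry is `±1`. -/
def IsGauge {n : ℕ} (σ : Fin n → ℝ) : Prop := ∀ i, σ i = 1 ∨ σ i = -1

/-- Structural balance: there is a gauge transformation `D = diag σ` with all entries
of `D·A·D` (entrywise `σ i * A i j * σ j`) nonnegative. -/
def StructBalanced {n : ℕ} (A : Matrix (Fin n) (Fin n) ℝ) : Prop :=
  ∃ σ : Fin n → ℝ, IsGauge σ ∧ ∀ i j, 0 ≤ σ i * A i j * σ j

/-- Improved Laplacian potential function
`Φ_e(x) = Σ_i Σ_j det(L̄_ii)·|a_ij|·(x_i − sgn(a_ij)·x_j)²`. -/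
noncomputable def PhiE {n : ℕ} (A : Matrix (Fin n) (Fin n) ℝ) (x : Fin n → ℝ) : ℝ :=
  ∑ i, ∑ j, minorDet A i * |A i j| * (x i - Real.sign (A i j) * x j) ^ 2


section AuxLemmas
open Polynomial

lemma eval_charpoly' {m : Type*} [Fintype m] [DecidableEq m] (M : Matrix m m ℝ) (t : ℝ) :
    M.charpoly.eval t = (Matrix.diagonal (fun _ => t) - M).det := by
  rw [Matrix.charpoly, ← Polynomial.coe_evalRingHom, RingHom.map_det]
  congr 1
  ext i j
  rw [RingHom.mapMatrix_apply, Matrix.map_apply]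
  by_cases h : i = j
  · subst h
    simp [Matrix.charmatrix_apply_eq]
  · simp [Matrix.charmatrix_apply_ne _ _ _ h, Matrix.diagonal_apply_ne _ h]

lemma det_pos_of_weak_dom {m : Type*} [Fintype m] [DecidableEq m] [Nonempty m]
    (M : Matrix m m ℝ)
    (hdom : ∀ k, ∑ j ∈ Finset.univ.erase k, |M k j| ≤ M k k)
    (hker : ∀ v : m → ℝ, M.mulVec v = 0 → v = 0) :
    0 < M.det := by
  set q : Polynomial ℝ := (-M).charpoly with hq
  have hqe : ∀ t : ℝ, q.eval t = (Matrix.diagonal (fun _ => t) + M).det := by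
    intro t
    rw [hq, eval_charpoly', sub_neg_eq_add]
  have hdiagpos : ∀ k, (0:ℝ) ≤ M k k := fun k =>
    le_trans (Finset.sum_nonneg fun j _ => abs_nonneg _) (hdom k)
  -- for t > 0, eval ≠ 0
  have hne : ∀ t : ℝ, 0 < t → q.eval t ≠ 0 := by
    intro t ht
    rw [hqe]
    apply det_ne_zero_of_sum_row_lt_diag
    intro k
    have h1 : ∀ j ∈ Finset.univ.erase k, ‖((Matrix.diagonal (fun _ => t) + M : Matrix m m ℝ)) k j‖ = |M k j| := by
      intro j hj
      have hjk : j ≠ k := (Finset.mem_erase.mp hj).1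
      simp [Matrix.diagonal_apply_ne' _ hjk, Real.norm_eq_abs]
    rw [Finset.sum_congr rfl h1]
    have h2 : ((Matrix.diagonal (fun _ => t) + M : Matrix m m ℝ)) k k = t + M k k := by
      simp [Matrix.diagonal_apply_eq]
    rw [h2, Real.norm_eq_abs, abs_of_pos (by linarith [hdiagpos k])]
    calc ∑ j ∈ Finset.univ.erase k, |M k j| ≤ M k k := hdom k
      _ < t + M k k := by linarith
  have hmono : q.Monic := Matrix.charpoly_monic _
  have hdeg : 0 < q.degree := by
    rw [Polynomial.degree_eq_natDegree hmono.ne_zero, hq, Matrix.charpoly_natDegree_eq_dim]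
    exact_mod_cast Fintype.card_pos
  have htop : Tendsto (fun x => q.eval x) atTop atTop :=
    q.tendsto_atTop_of_leadingCoeff_nonneg hdeg (by rw [hmono.leadingCoeff]; norm_num)
  obtain ⟨T, hT⟩ := ((htop.eventually_ge_atTop 1).and (eventually_ge_atTop (1:ℝ))).exists
  have hpos : ∀ t : ℝ, 0 < t → 0 < q.eval t := by
    intro t ht
    by_contra hle
    push_neg at hle
    have h0 : (0:ℝ) ∈ Set.uIcc (q.eval t) (q.eval T) :=
      Set.mem_uIcc.mpr (Or.inl ⟨hle, by linarith [hT.1]⟩)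
    obtain ⟨s, hs, hs0⟩ := intermediate_value_uIcc (Continuous.continuousOn (q.continuous)) h0
    have hspos : 0 < s := by
      rcases Set.mem_uIcc.mp hs with h | h
      · linarith [h.1]
      · linarith [h.1, hT.2]
    exact hne s hspos hs0
  have hdet0 : M.det = q.eval 0 := by
    rw [hqe 0]
    congr 1
    ext i j
    by_cases h : i = j <;> simp [h]
  have hge : 0 ≤ M.det := by
    rw [hdet0]
    have hcont : Tendsto (fun t => q.eval t) (nhdsWithin 0 (Set.Ioi 0)) (nhds (q.eval 0)) :=
      (q.continuous.tendsto 0).mono_left nhdsWithin_le_nhds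
    exact ge_of_tendsto hcont (eventually_nhdsWithin_of_forall fun t ht => (hpos t ht).le)
  have hne0 : M.det ≠ 0 := by
    intro h
    obtain ⟨v, hv, hv0⟩ := Matrix.exists_mulVec_eq_zero_iff.mpr h
    exact hv (hker v hv0)
  exact lt_of_le_of_ne hge (Ne.symm hne0)

/-- kernel lemma -/
lemma ker_triv {n : ℕ} (A : Matrix (Fin n) (Fin n) ℝ) (hsc : StronglyConnected A) (i : Fin n) (x : Fin n → ℝ)
    (hxi : x i = 0) (heq : ∀ k, k ≠ i → ∑ j, |A k j| * (x k - x j) = 0) : x = 0 := by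
  have claim : ∀ y : Fin n → ℝ, y i = 0 →
      (∀ k, k ≠ i → ∑ j, |A k j| * (y k - y j) = 0) → ∀ k, y k ≤ 0 := by
    intro y hyi hyeq k
    by_contra hk
    push_neg at hk
    have hne : (Finset.univ : Finset (Fin n)).Nonempty := ⟨i, Finset.mem_univ i⟩
    set m : ℝ := Finset.univ.sup' hne y with hm
    have hmy : ∀ j, y j ≤ m := fun j => Finset.le_sup' y (Finset.mem_univ j)
    have hmpos : 0 < m := lt_of_lt_of_le hk (hmy k)
    have P : ∀ v, y v = m → ∀ u, A v u ≠ 0 → y u = m := by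
      intro v hv u hu
      have hvi : v ≠ i := fun h => by rw [h, hyi] at hv; linarith
      have hsum := hyeq v hvi
      have hterm : ∀ j ∈ Finset.univ, (0:ℝ) ≤ |A v j| * (y v - y j) := by
        intro j _
        exact mul_nonneg (abs_nonneg _) (by rw [hv]; linarith [hmy j])
      have := (Finset.sum_eq_zero_iff_of_nonneg hterm).mp hsum u (Finset.mem_univ u)
      rcases mul_eq_zero.mp this with h | h
      · exact absurd (abs_eq_zero.mp h) hu
      · rw [hv] at h; linarith
    obtain ⟨k0, _, hk0⟩ := Finset.exists_mem_eq_sup' hne y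
    have hik0 : i ≠ k0 := fun h => by rw [← h, hyi] at hk0; linarith
    have key : ∀ c : Fin n, Relation.TransGen (fun u v => A v u ≠ 0) i c →
        y c = m → y i = m := by
      intro c h
      induction h with
      | single h => exact fun hc => P _ hc _ h
      | tail h1 h2 ih => exact fun hc => ih (P _ hc _ h2)
    have := key k0 (hsc i k0 hik0) hk0.symm
    rw [hyi] at this; linarith
  have h1 := claim x hxi heq
  have h2 := claim (fun j => -(x j)) (by simp [hxi]) (by
    intro k hk
    have : ∑ j, |A k j| * (-(x k) - -(x j)) = -∑ j, |A k j| * (x k - x j) := by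
      rw [← Finset.sum_neg_distrib]
      exact Finset.sum_congr rfl fun j _ => by ring
    rw [this, heq k hk, neg_zero])
  funext j
  have := h2 j
  simp only [neg_nonpos] at this
  exact le_antisymm (h1 j) this

lemma lapBar_row {n : ℕ} (A : Matrix (Fin n) (Fin n) ℝ) (hdiag : ∀ i, A i i = 0)
    (k : Fin n) (x : Fin n → ℝ) :
    ∑ j, lapBar A k j * x j = ∑ j, |A k j| * (x k - x j) := by
  have h1 : ∑ j, lapBar A k j * x j
      = ∑ j, (Matrix.diagonal (inDeg A) k j * x j - |A k j| * x j) := by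
    refine Finset.sum_congr rfl fun j _ => ?_
    simp [lapBar, sub_mul]
  rw [h1, Finset.sum_sub_distrib]
  have h2 : ∑ j, Matrix.diagonal (inDeg A) k j * x j = inDeg A k * x k := by
    rw [Finset.sum_eq_single k]
    · simp
    · intro j _ hj
      simp [Matrix.diagonal_apply_ne' _ hj]
    · simp
  rw [h2]
  have h3 : ∑ j, |A k j| * (x k - x j) = (∑ j, |A k j|) * x k - ∑ j, |A k j| * x j := by
    rw [Finset.sum_mul, ← Finset.sum_sub_distrib]
    exact Finset.sum_congr rfl fun j _ => by ring
  rw [h3]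
  rfl

lemma minorDet_pos {n : ℕ} (hn : 2 ≤ n) (A : Matrix (Fin n) (Fin n) ℝ)
    (hdiag : ∀ i, A i i = 0) (hsc : StronglyConnected A) (i : Fin n) :
    0 < minorDet A i := by
  have hnon : Nonempty {j : Fin n // j ≠ i} := by
    obtain ⟨j, hj⟩ := Fintype.exists_ne_of_one_lt_card (by simp; omega) i
    exact ⟨⟨j, hj⟩⟩
  set M : Matrix {j : Fin n // j ≠ i} {j : Fin n // j ≠ i} ℝ :=
    (lapBar A).submatrix (fun k => (k : Fin n)) (fun k => (k : Fin n)) with hM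
  have hMd : ∀ k : {j : Fin n // j ≠ i}, M k k = inDeg A (k : Fin n) := by
    intro k
    simp [hM, lapBar, hdiag]
  have hMo : ∀ k j : {j : Fin n // j ≠ i}, j ≠ k → M k j = -|A (k:Fin n) (j:Fin n)| := by
    intro k j hjk
    have : (j : Fin n) ≠ (k : Fin n) := fun h => hjk (Subtype.ext h)
    simp [hM, lapBar, Matrix.diagonal_apply_ne' _ this]
  refine det_pos_of_weak_dom M ?_ ?_
  · intro k
    rw [hMd]
    have he : ∀ j ∈ Finset.univ.erase k, |M k j| = |A (k:Fin n) (j:Fin n)| := by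
      intro j hj
      rw [hMo k j (Finset.mem_erase.mp hj).1, abs_neg, abs_abs]
    rw [Finset.sum_congr rfl he]
    have step1 : ∑ j ∈ Finset.univ.erase k, |A (k:Fin n) (j:Fin n)|
        ≤ ∑ j : {j : Fin n // j ≠ i}, |A (k:Fin n) (j:Fin n)| :=
      Finset.sum_le_sum_of_subset_of_nonneg (Finset.erase_subset _ _)
        (fun j _ _ => abs_nonneg _)
    have step2 : ∑ j : {j : Fin n // j ≠ i}, |A (k:Fin n) (j:Fin n)|
        = ∑ j ∈ Finset.univ.erase i, |A (k:Fin n) j| :=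
      (Finset.sum_subtype (p := fun j => j ≠ i) (Finset.univ.erase i)
        (fun x => by simp) (fun j => |A (k:Fin n) j|)).symm
    have step3 : ∑ j ∈ Finset.univ.erase i, |A (k:Fin n) j| ≤ ∑ j, |A (k:Fin n) j| :=
      Finset.sum_le_sum_of_subset_of_nonneg (Finset.subset_univ _)
        (fun j _ _ => abs_nonneg _)
    calc ∑ j ∈ Finset.univ.erase k, |A (k:Fin n) (j:Fin n)|
        ≤ ∑ j ∈ Finset.univ.erase i, |A (k:Fin n) j| := step2 ▸ step1
      _ ≤ inDeg A (k : Fin n) := step3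
  · intro v hv
    set x : Fin n → ℝ := fun j => if h : j = i then 0 else v ⟨j, h⟩ with hx
    have hxi : x i = 0 := by simp [hx]
    have hxv : ∀ j : {j : Fin n // j ≠ i}, x (j : Fin n) = v j := by
      intro j
      simp [hx, j.2]
    have heq : ∀ k, k ≠ i → ∑ j, |A k j| * (x k - x j) = 0 := by
      intro k hk
      rw [← lapBar_row A hdiag]
      have split : ∑ j, lapBar A k j * x j
          = lapBar A k i * x i + ∑ j ∈ Finset.univ.erase i, lapBar A k j * x j :=
        (Finset.add_sum_erase _ _ (Finset.mem_univ i)).symm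
      rw [split, hxi, mul_zero, zero_add]
      have : ∑ j ∈ Finset.univ.erase i, lapBar A k j * x j
          = ∑ j : {j : Fin n // j ≠ i}, lapBar A k (j : Fin n) * x (j : Fin n) :=
        Finset.sum_subtype (p := fun j => j ≠ i) (Finset.univ.erase i)
          (fun x => by simp) (fun j => lapBar A k j * x j)
      rw [this]
      have hk' := congrFun hv ⟨k, hk⟩
      simpa [Matrix.mulVec, dotProduct, hM, hxv] using hk'
    have hx0 := ker_triv A hsc i x hxi heq
    funext j
    rw [← hxv j, hx0]
    rfl

end AuxLemmas

/-- `G` is structurally balanced iff `Φ_e` is positive semidefinite with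
null set exactly `span{D·1_n}`. -/
theorem balanced_iff_phiE_psd (n : ℕ) (hn : 2 ≤ n)
    (A : Matrix (Fin n) (Fin n) ℝ)
    (hdiag : ∀ i, A i i = 0) (hdigon : ∀ i j, 0 ≤ A i j * A j i)
    (hsc : StronglyConnected A) :
    StructBalanced A ↔
      ((∀ x : Fin n → ℝ, 0 ≤ PhiE A x) ∧
        ∃ σ : Fin n → ℝ, IsGauge σ ∧ (∀ i j, 0 ≤ σ i * A i j * σ j) ∧
          ∀ x : Fin n → ℝ, PhiE A x = 0 → ∃ c : ℝ, x = c • σ) := by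
  constructor
  · rintro ⟨σ, hσ, hb⟩
    have hpos := fun i => minorDet_pos hn A hdiag hsc i
    have hterm : ∀ (x : Fin n → ℝ) i j,
        (0:ℝ) ≤ minorDet A i * |A i j| * (x i - Real.sign (A i j) * x j) ^ 2 :=
      fun x i j => mul_nonneg (mul_nonneg (hpos i).le (abs_nonneg _)) (sq_nonneg _)
    refine ⟨fun x => Finset.sum_nonneg fun i _ => Finset.sum_nonneg fun j _ => hterm x i j,
      σ, hσ, hb, ?_⟩
    intro x hx
    have hzero : ∀ i j, A i j ≠ 0 → x i = Real.sign (A i j) * x j := by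
      intro i j hij
      have h1 := (Finset.sum_eq_zero_iff_of_nonneg
        (fun i _ => Finset.sum_nonneg fun j _ => hterm x i j)).mp hx i (Finset.mem_univ i)
      have h2 := (Finset.sum_eq_zero_iff_of_nonneg
        (fun j _ => hterm x i j)).mp h1 j (Finset.mem_univ j)
      have habs : |A i j| ≠ 0 := abs_ne_zero.mpr hij
      have hsq0 : (x i - Real.sign (A i j) * x j) ^ 2 = 0 := by
        rcases mul_eq_zero.mp h2 with h | h
        · rcases mul_eq_zero.mp h with h' | h'
          · exact absurd h' (ne_of_gt (hpos i))
          · exact absurd h' habs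
        · exact h
      have := pow_eq_zero_iff (n := 2) (by norm_num) |>.mp hsq0
      linarith
    have hsq : ∀ i, σ i * σ i = 1 := by
      intro i; rcases hσ i with h | h <;> rw [h] <;> norm_num
    have hsign : ∀ i j, A i j ≠ 0 → Real.sign (A i j) = σ i * σ j := by
      intro i j hij
      have hb' := hb i j
      rcases hσ i with hi | hi <;> rcases hσ j with hj | hj <;> rw [hi, hj] at hb' ⊢
      · have hA : 0 < A i j := lt_of_le_of_ne (by linarith) (Ne.symm hij)
        rw [Real.sign_of_pos hA]; norm_num
      · have hA : A i j < 0 := lt_of_le_of_ne (by linarith) hij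
        rw [Real.sign_of_neg hA]; norm_num
      · have hA : A i j < 0 := lt_of_le_of_ne (by linarith) hij
        rw [Real.sign_of_neg hA]; norm_num
      · have hA : 0 < A i j := lt_of_le_of_ne (by linarith) (Ne.symm hij)
        rw [Real.sign_of_pos hA]; norm_num
    have hstep : ∀ u v : Fin n, A v u ≠ 0 → σ v * x v = σ u * x u := by
      intro u v h
      have hx' := hzero v u h
      rw [hsign v u h] at hx'
      calc σ v * x v = (σ v * σ v) * (σ u * x u) := by rw [hx']; ring
        _ = σ u * x u := by rw [hsq v]; ring
    have hn0 : 0 < n := by omega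
    set i0 : Fin n := ⟨0, hn0⟩ with hi0
    refine ⟨σ i0 * x i0, ?_⟩
    funext k
    have huk : σ k * x k = σ i0 * x i0 := by
      by_cases hk : k = i0
      · rw [hk]
      · have key : ∀ c : Fin n, Relation.TransGen (fun u v => A v u ≠ 0) i0 c →
            σ c * x c = σ i0 * x i0 := by
          intro c h
          induction h with
          | single h => exact hstep _ _ h
          | tail h1 h2 ih => exact (hstep _ _ h2).trans ih
        exact key k (hsc i0 k (fun h => hk h.symm))
    show x k = (σ i0 * x i0) * σ k
    calc x k = σ k * (σ k * x k) := by rw [← mul_assoc, hsq k, one_mul]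
      _ = σ k * (σ i0 * x i0) := by rw [huk]
      _ = (σ i0 * x i0) * σ k := by ring
  · rintro ⟨-, σ, hσ, hb, -⟩
    exact ⟨σ, hσ, hb⟩
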